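/- Let q be a prime power and let s, k, b be positive integers with k ≥ b and gcd(k, q - 1) = 1. Then there exists an F_q-linear code of length s·(q^k - 1)/(q - 1) and dimension k in which every nonzero codeword has b-symbol weight exactly s·(q^k - q^{k-b})/(q - 1); in particular, its minimum b-symbol distance is s·(q^k - q^{k-b})/(q - 1). -/

import Mathlib

open Polynomial

universe u

lemma exists_finite_ext (F : Type u) [Field F] [Fintype F] {k : ℕ} (hk : k ≠ 0) :
    ∃ (K : Type u) (_ : Field K) (_ : Algebra F K) (_ : Fintype K),
      Module.finrank F K = k := by
  classical
  set q := Fintype.card F with hq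
  have hq2 : 1 < q := Fintype.one_lt_card
  set P : F[X] := X ^ (q ^ k) - X with hP
  let K := P.SplittingField
  letI : Field K := inferInstance
  letI : Algebra F K := inferInstance
  have hFD : FiniteDimensional F K := inferInstance
  haveI : Finite K := Module.finite_of_finite F
  letI : Fintype K := Fintype.ofFinite K
  -- characteristic
  obtain ⟨p, hpi⟩ := CharP.exists F
  haveI : CharP F p := hpi
  obtain ⟨r, hpp, hcard⟩ := FiniteField.card F p
  haveI : Fact p.Prime := ⟨hpp⟩
  haveI : CharP K p := charP_of_injective_algebraMap (algebraMap F K).injective p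
  have hpdvd : p ∣ q ^ k := by
    rw [hq, hcard, ← pow_mul]
    exact dvd_pow_self p (by positivity)
  have hPne : P ≠ 0 := FiniteField.X_pow_card_pow_sub_X_ne_zero F hk hq2
  have hPdeg : P.natDegree = q ^ k := FiniteField.X_pow_card_pow_sub_X_natDegree_eq F hk hq2
  have hsep : P.Separable := galois_poly_separable p (q ^ k) hpdvd
  have hroots : Fintype.card (P.rootSet K) = q ^ k := by
    rw [card_rootSet_eq_natDegree hsep (SplittingField.splits P), hPdeg]
  -- the subalgebra of fixed points
  have hqpow : q ^ k = p ^ (r * k) := by rw [hq, hcard, ← pow_mul]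
  let Sa : Subalgebra F K :=
    { carrier := {x : K | x ^ (q ^ k) = x}
      mul_mem' := by
        intro x y hx hy
        simp only [Set.mem_setOf_eq] at *
        rw [mul_pow, hx, hy]
      one_mem' := by
        show (1 : K) ^ (q ^ k) = 1
        exact one_pow _
      add_mem' := by
        intro x y hx hy
        simp only [Set.mem_setOf_eq] at *
        rw [hqpow] at hx hy ⊢
        rw [add_pow_char_pow, hx, hy]
      zero_mem' := by
        show (0 : K) ^ (q ^ k) = 0
        exact zero_pow (by positivity)
      algebraMap_mem' := fun a => by
        simp only [Set.mem_setOf_eq]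
        rw [← map_pow, FiniteField.pow_card_pow] }
  have hSa : Sa = ⊤ := by
    rw [← top_le_iff, ← SplittingField.adjoin_rootSet P]
    apply Algebra.adjoin_le
    intro x hx
    rw [mem_rootSet_of_ne hPne] at hx
    have hx' : (aeval x) (X ^ q ^ k - X : F[X]) = 0 := hx
    simp only [map_sub, map_pow, aeval_X, sub_eq_zero] at hx'
    exact hx'
  have huniv : P.rootSet K = Set.univ := by
    rw [Set.eq_univ_iff_forall]
    intro x
    have hx : x ∈ Sa := hSa ▸ Algebra.mem_top
    have hxx : x ^ (q ^ k) = x := hx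
    rw [mem_rootSet_of_ne hPne]
    show (aeval x) (X ^ q ^ k - X : F[X]) = 0
    simp only [map_sub, map_pow, aeval_X, sub_eq_zero]
    exact hxx
  have hcardK : Fintype.card K = q ^ k := by
    rw [← hroots]
    exact (Fintype.card_congr ((Equiv.setCongr huniv).trans (Equiv.Set.univ K))).symm
  have : q ^ Module.finrank F K = q ^ k := by
    rw [← Module.card_eq_pow_finrank (K := F) (V := K), hcardK]
  exact ⟨K, inferInstance, inferInstance, inferInstance,
    Nat.pow_right_injective hq2 this⟩

lemma filter_card_range_mul (N s : ℕ) (P : ℕ → Prop) [DecidablePred P]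
    (hP : ∀ t, P t ↔ P (t % N)) :
    ((Finset.range (s * N)).filter P).card = s * ((Finset.range N).filter P).card := by
  induction s with
  | zero => simp
  | succ s ih =>
    have hdisj : Disjoint ((Finset.range (s * N)).filter P)
        (((Finset.range N).map (addLeftEmbedding (s * N))).filter P) := by
      apply Finset.disjoint_filter_filter
      rw [Finset.disjoint_left]
      intro a ha hb
      simp only [Finset.mem_range] at ha
      simp only [Finset.mem_map, addLeftEmbedding_apply] at hb
      obtain ⟨r, _, rfl⟩ := hb
      omega
    have hcong : (Finset.range N).filter (P ∘ (addLeftEmbedding (s * N)))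
        = (Finset.range N).filter P := by
      apply Finset.filter_congr
      intro r hr
      simp only [Function.comp_apply, addLeftEmbedding_apply]
      rw [hP (s * N + r), add_comm (s * N) r, Nat.add_mul_mod_self_right, ← hP r]
    rw [Nat.succ_mul, Finset.range_add, Finset.filter_union,
      Finset.card_union_of_disjoint hdisj, ih, Finset.filter_map, Finset.card_map, hcong,
      Nat.succ_mul]

/-- The `b`-symbol weight of a vector `c ∈ F^n` (coordinates indexed cyclically by `ZMod n`). -/
noncomputable def bWt {n : ℕ} {F : Type*} [Zero F] (b : ℕ) (c : ZMod n → F) : ℕ :=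
  Nat.card {i : ZMod n | ∃ j < b, c (i + (j : ZMod n)) ≠ 0}

set_option maxHeartbeats 1000000 in
/-- If `gcd(k, q-1) = 1` and `k ≥ b`, then there exists an `F_q`-linear code of length
`s·(q^k-1)/(q-1)` and dimension `k` in which every nonzero codeword has `b`-symbol weight
exactly `s·(q^k - q^{k-b})/(q-1)`; in particular its minimum `b`-symbol distance equals
this value. -/
theorem stmt8 (q s k b : ℕ) (hs : 0 < s) (hb : 0 < b) (hkb : b ≤ k)
    (hgcd : Nat.gcd k (q - 1) = 1)
    (F : Type*) [Field F] [Fintype F] (hF : Fintype.card F = q) :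
    ∃ C : Submodule F (ZMod (s * ((q ^ k - 1) / (q - 1))) → F),
      Module.finrank F C = k ∧
      (∀ c ∈ C, c ≠ 0 → bWt b c = s * ((q ^ k - q ^ (k - b)) / (q - 1))) ∧
      IsLeast {w | ∃ c ∈ C, c ≠ 0 ∧ bWt b c = w}
        (s * ((q ^ k - q ^ (k - b)) / (q - 1))) := by
  classical
  have hk0 : k ≠ 0 := by omega
  have hq2 : 1 < q := by rw [← hF]; exact Fintype.one_lt_card
  set D := q - 1 with hDdef
  set N := (q ^ k - 1) / D with hNdef
  have hD0 : 0 < D := by omega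
  have hdvd : D ∣ q ^ k - 1 := by simpa using Nat.sub_dvd_pow_sub_pow q 1 k
  have hDN : D * N = q ^ k - 1 := Nat.mul_div_cancel' hdvd
  have hqqk : q ≤ q ^ k := Nat.le_self_pow hk0 q
  have hqk2 : 2 ≤ q ^ k := le_trans hq2 hqqk
  have hqkb1 : 1 ≤ q ^ (k - b) := Nat.one_le_pow _ _ (by omega)
  have hqkbk : q ^ (k - b) ≤ q ^ k := Nat.pow_le_pow_right (by omega) (by omega)
  have hN0 : 0 < N := Nat.div_pos (by omega) hD0
  haveI : NeZero (s * N) := ⟨by positivity⟩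
  obtain ⟨K, _, _, _, hrank⟩ := exists_finite_ext F hk0
  haveI : FiniteDimensional F K := inferInstance
  have hcardK : Fintype.card K = q ^ k := by
    rw [Module.card_eq_pow_finrank (K := F) (V := K), hrank, hF]
  obtain ⟨g, hg⟩ := IsCyclic.exists_generator (α := Kˣ)
  set γ : K := (g : K) with hγdef
  have hγ0 : γ ≠ 0 := Units.ne_zero g
  have horder : orderOf g = q ^ k - 1 := by
    rw [orderOf_eq_card_of_forall_mem_zpowers hg, Nat.card_eq_fintype_card,
      Fintype.card_units, hcardK]
  have hγQ : γ ^ (q ^ k - 1) = 1 := by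
    have h := pow_orderOf_eq_one g
    rw [horder] at h
    calc γ ^ (q ^ k - 1) = ((g ^ (q ^ k - 1) : Kˣ) : K) := by
          rw [Units.val_pow_eq_pow_val]
    _ = 1 := by rw [h]; rfl
  -- every (q-1)-st root of unity lies in F
  have hFim : ∀ c : K, c ^ D = 1 → ∃ u : F, u ≠ 0 ∧ algebraMap F K u = c := by
    intro c hc
    have hmon : (X ^ D - 1 : K[X]).Monic := by
      have h := monic_X_pow_sub_C (1 : K) (by omega : D ≠ 0)
      simpa using h
    have hP1ne : (X ^ D - 1 : K[X]) ≠ 0 := hmon.ne_zero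
    have hdeg1 : (X ^ D - 1 : K[X]).natDegree = D := by
      simpa using natDegree_X_pow_sub_C (n := D) (r := (1 : K))
    have hRcard : (X ^ D - 1 : K[X]).roots.toFinset.card ≤ D := by
      calc (X ^ D - 1 : K[X]).roots.toFinset.card
          ≤ Multiset.card (X ^ D - 1 : K[X]).roots := Multiset.toFinset_card_le _
      _ ≤ (X ^ D - 1 : K[X]).natDegree := card_roots' _
      _ = D := hdeg1
    set A : Finset K := Finset.univ.image (fun u : Fˣ => algebraMap F K (u : F)) with hA
    have hAcard : A.card = D := by
      rw [hA, Finset.card_image_of_injective _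
        (fun u v huv => Units.ext ((algebraMap F K).injective huv)),
        Finset.card_univ, Fintype.card_units, hF]
    have hsub : A ⊆ (X ^ D - 1 : K[X]).roots.toFinset := by
      intro y hy
      simp only [hA, Finset.mem_image, Finset.mem_univ, true_and] at hy
      obtain ⟨v, rfl⟩ := hy
      rw [Multiset.mem_toFinset, mem_roots hP1ne]
      have hv : (v : F) ^ D = 1 := by
        have h := FiniteField.pow_card_sub_one_eq_one (a := (v : F)) v.ne_zero
        rwa [hF] at h
      simp only [IsRoot, eval_sub, eval_pow, eval_X, eval_one, ← map_pow, hv, map_one,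
        sub_self]
    have hAR : A = (X ^ D - 1 : K[X]).roots.toFinset :=
      Finset.eq_of_subset_of_card_le hsub (by omega)
    have hcR : c ∈ (X ^ D - 1 : K[X]).roots.toFinset := by
      rw [Multiset.mem_toFinset, mem_roots hP1ne]
      simp [IsRoot, hc]
    rw [← hAR] at hcR
    simp only [hA, Finset.mem_image, Finset.mem_univ, true_and] at hcR
    obtain ⟨v, hv⟩ := hcR
    exact ⟨v, v.ne_zero, hv⟩
  have hNF : ∀ t : ℕ, ∃ u : F, u ≠ 0 ∧ algebraMap F K u = γ ^ (N * t) := by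
    intro t
    apply hFim
    rw [← pow_mul, show N * t * D = (q ^ k - 1) * t by rw [← hDN]; ring, pow_mul, hγQ,
      one_pow]
  -- minimal polynomial of γ has degree k
  have hint : IsIntegral F γ := IsIntegral.of_finite F γ
  have hadj : Algebra.adjoin F {γ} = ⊤ := by
    rw [eq_top_iff]
    intro x _
    by_cases hx : x = 0
    · exact hx ▸ Subalgebra.zero_mem _
    · obtain ⟨m, hm⟩ : ∃ m : ℕ, γ ^ m = x := by
        obtain ⟨m, hm⟩ := (mem_powers_iff_mem_zpowers).mpr (hg (Units.mk0 x hx))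
        refine ⟨m, ?_⟩
        have h := congrArg Units.val hm
        simpa [Units.val_pow_eq_pow_val] using h
      exact hm ▸ Subalgebra.pow_mem _ (Algebra.self_mem_adjoin_singleton F γ) m
  have hdeg : (minpoly F γ).natDegree = k := by
    have h1 : Module.finrank F (Algebra.adjoin F {γ}) = (minpoly F γ).natDegree := by
      rw [(Algebra.adjoin.powerBasis hint).finrank, Algebra.adjoin.powerBasis_dim]
    have h2 : Module.finrank F (Algebra.adjoin F {γ}) = k := by
      rw [hadj, ← hrank]
      exact Subalgebra.topEquiv.toLinearEquiv.finrank_eq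
    omega
  have hli : LinearIndependent F (fun i : Fin k => γ ^ (i : ℕ)) := by
    have h := linearIndependent_pow (K := F) γ
    rwa [hdeg] at h
  haveI : Nonempty (Fin k) := ⟨⟨0, by omega⟩⟩
  set β : Module.Basis (Fin k) F K :=
    basisOfLinearIndependentOfCardEqFinrank hli (by simp [hrank]) with hβdef
  have hβ : ∀ i : Fin k, β i = γ ^ (i : ℕ) := fun i => by
    rw [hβdef, coe_basisOfLinearIndependentOfCardEqFinrank]
  set i0 : Fin k := ⟨0, by omega⟩ with hi0
  set φ : K →ₗ[F] F := β.coord i0 with hφ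
  have hφ1 : φ 1 = 1 := by
    have h1 : (1 : K) = β i0 := by rw [hβ i0]; norm_num [hi0]
    rw [h1, hφ, Module.Basis.coord_apply, Module.Basis.repr_self, Finsupp.single_eq_same]
  set B : K →ₗ[F] Module.Dual F K := (LinearMap.mul F K).compr₂ φ with hBdef
  have hB : ∀ x y : K, B x y = φ (x * y) := fun x y => rfl
  have hBinj : Function.Injective B := by
    rw [← LinearMap.ker_eq_bot, eq_bot_iff]
    intro x hx
    simp only [LinearMap.mem_ker] at hx
    rw [Submodule.mem_bot]
    by_contra hx0
    have h1 : B x x⁻¹ = 0 := by rw [hx]; rfl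
    rw [hB, mul_inv_cancel₀ hx0, hφ1] at h1
    exact one_ne_zero h1
  have hBsurj : Function.Surjective B :=
    (LinearMap.injective_iff_surjective_of_finrank_eq_finrank
      (Subspace.dual_finrank_eq).symm).mp hBinj
  -- the scalar-reduction trick
  have hsc : ∀ (z : K) (t : ℕ), (φ (z * γ ^ t) = 0 ↔ φ (z * γ ^ (t % N)) = 0) := by
    intro z t
    obtain ⟨u, hu0, hu⟩ := hNF (t / N)
    have ht : z * γ ^ t = u • (z * γ ^ (t % N)) := by
      have h5 : γ ^ t = γ ^ (t % N + N * (t / N)) := by rw [Nat.mod_add_div]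
      rw [h5, pow_add, Algebra.smul_def, hu]
      ring
    rw [ht, map_smul, smul_eq_mul, mul_eq_zero]
    simp [hu0]
  -- the evaluation map Ψ and kernels
  set Ψ : K →ₗ[F] (Fin b → F) :=
    LinearMap.pi (fun j : Fin b => B (γ ^ (j : ℕ))) with hΨdef
  have hΨ : ∀ (y : K) (j : Fin b), Ψ y j = φ (γ ^ (j : ℕ) * y) := fun y j => rfl
  have hΨsurj : Function.Surjective Ψ := by
    intro v
    obtain ⟨y, hy⟩ := hBsurj (∑ j : Fin b, v j • β.coord (Fin.castLE hkb j))
    refine ⟨y, funext fun j => ?_⟩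
    have h1 : Ψ y j = B y (γ ^ (j : ℕ)) := by rw [hΨ, hB, mul_comm]
    have h2 : γ ^ (j : ℕ) = β (Fin.castLE hkb j) := by rw [hβ]; rfl
    rw [h1, hy]
    simp only [LinearMap.coe_sum, Finset.sum_apply, LinearMap.smul_apply,
      Module.Basis.coord_apply, h2, Module.Basis.repr_self, smul_eq_mul, Finsupp.single_apply,
      Fin.castLE_inj]
    simp [Finset.sum_ite_eq, eq_comm]
  have hkerrank : ∀ L : K →ₗ[F] (Fin b → F), Function.Surjective L →
      Module.finrank F (LinearMap.ker L) = k - b := by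
    intro L hL
    have h1 := LinearMap.finrank_range_add_finrank_ker L
    rw [LinearMap.range_eq_top.mpr hL, finrank_top, hrank] at h1
    have h2 : Module.finrank F (Fin b → F) = b := by
      rw [Module.finrank_pi, Fintype.card_fin]
    omega
  have hcardker : ∀ x : K, x ≠ 0 →
      Nat.card {y : K | y ≠ 0 ∧ ∀ j < b, φ (x * y * γ ^ j) = 0} = q ^ (k - b) - 1 := by
    intro x hx
    set L : K →ₗ[F] (Fin b → F) := Ψ ∘ₗ LinearMap.mulLeft F x with hL
    have hLsurj : Function.Surjective L := by
      apply hΨsurj.comp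
      intro z
      exact ⟨x⁻¹ * z, by simp [mul_inv_cancel_left₀ hx]⟩
    have hker : Module.finrank F (LinearMap.ker L) = k - b := hkerrank L hLsurj
    haveI : Fintype (LinearMap.ker L) := Fintype.ofFinite _
    have hcard : Nat.card (LinearMap.ker L) = q ^ (k - b) := by
      rw [Nat.card_eq_fintype_card,
        Module.card_eq_pow_finrank (K := F) (V := LinearMap.ker L), hF, hker]
    have hset : {y : K | y ≠ 0 ∧ ∀ j < b, φ (x * y * γ ^ j) = 0}
        = (LinearMap.ker L : Set K) \ {0} := by
      ext y
      simp only [Set.mem_setOf_eq, Set.mem_diff, SetLike.mem_coe, LinearMap.mem_ker,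
        Set.mem_singleton_iff]
      constructor
      · rintro ⟨hy0, hy⟩
        refine ⟨funext fun j => ?_, hy0⟩
        have h0 := hy (j : ℕ) j.isLt
        have h1 : (L y) j = φ (γ ^ (j : ℕ) * (x * y)) := rfl
        have h2 : γ ^ (j : ℕ) * (x * y) = x * y * γ ^ (j : ℕ) := by ring
        show (L y) j = 0
        rw [h1, h2, h0]
      · rintro ⟨hy, hy0⟩
        refine ⟨hy0, fun j hj => ?_⟩
        have h0 := congrFun hy (⟨j, hj⟩ : Fin b)
        have h1 : (L y) (⟨j, hj⟩ : Fin b) = φ (γ ^ j * (x * y)) := rfl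
        have h2 : γ ^ j * (x * y) = x * y * γ ^ j := by ring
        rw [h1, h2] at h0
        exact h0
    rw [hset, Nat.card_coe_set_eq,
      Set.ncard_diff_singleton_of_mem (by simp : (0 : K) ∈ (LinearMap.ker L : Set K))]
    have h3 : (LinearMap.ker L : Set K).ncard = q ^ (k - b) := by
      rw [← Nat.card_coe_set_eq]
      simpa using hcard
    rw [h3]
  -- uniqueness of the discrete-log representation
  have hinj : ∀ m m' : ℕ, m < N → m' < N → ∀ u u' : F, u ≠ 0 → u' ≠ 0 →
      γ ^ m * algebraMap F K u = γ ^ m' * algebraMap F K u' → m = m' ∧ u = u' := by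
    intro m m' hm hm' u u' hu hu' heq
    have e1 : (algebraMap F K u) ^ D = 1 := by
      rw [← map_pow]
      have h := FiniteField.pow_card_sub_one_eq_one (a := u) hu
      rw [hF] at h
      rw [h, map_one]
    have e2 : (algebraMap F K u') ^ D = 1 := by
      rw [← map_pow]
      have h := FiniteField.pow_card_sub_one_eq_one (a := u') hu'
      rw [hF] at h
      rw [h, map_one]
    have hm_eq : m = m' := by
      have h1 : γ ^ (m * D) = γ ^ (m' * D) := by
        rw [pow_mul, pow_mul]
        calc (γ ^ m) ^ D = (γ ^ m * algebraMap F K u) ^ D := by rw [mul_pow, e1, mul_one]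
        _ = (γ ^ m' * algebraMap F K u') ^ D := by rw [heq]
        _ = (γ ^ m') ^ D := by rw [mul_pow, e2, mul_one]
      have h2 : g ^ (m * D) = g ^ (m' * D) := by
        apply Units.ext
        simpa [Units.val_pow_eq_pow_val] using h1
      rw [pow_eq_pow_iff_modEq, horder, ← hDN, mul_comm D N] at h2
      have h4 : m ≡ m' [MOD N] := Nat.ModEq.mul_right_cancel' (by omega) h2
      rwa [Nat.ModEq, Nat.mod_eq_of_lt hm, Nat.mod_eq_of_lt hm'] at h4
    subst hm_eq
    have hcan : algebraMap F K u = algebraMap F K u' :=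
      mul_left_cancel₀ (pow_ne_zero _ hγ0) heq
    exact ⟨rfl, (algebraMap F K).injective hcan⟩
  -- existence of the discrete-log representation
  have hlog : ∀ y : K, y ≠ 0 → ∃ m, m < N ∧ ∃ u : F, u ≠ 0 ∧
      y = γ ^ m * algebraMap F K u := by
    intro y hy
    obtain ⟨t, ht⟩ := (mem_powers_iff_mem_zpowers).mpr (hg (Units.mk0 y hy))
    have hyt : γ ^ t = y := by
      have h := congrArg Units.val ht
      simpa [Units.val_pow_eq_pow_val] using h
    obtain ⟨u, hu0, hu⟩ := hNF (t / N)
    refine ⟨t % N, Nat.mod_lt t hN0, u, hu0, ?_⟩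
    rw [hu, ← pow_add, ← hyt]
    congr 1
    exact (Nat.mod_add_div t N).symm ▸ rfl
  -- the count of "all-zero windows" in one period
  have hMcount : ∀ x : K, x ≠ 0 →
      ((Finset.range N).filter (fun m => ∀ j < b, φ (x * γ ^ (m + j)) = 0)).card * D
        = q ^ (k - b) - 1 := by
    intro x hx
    set A := (Finset.range N).filter (fun m => ∀ j < b, φ (x * γ ^ (m + j)) = 0) with hA
    rw [← hcardker x hx]
    have h1 : Nat.card (↥A × Fˣ) = A.card * D := by
      rw [Nat.card_prod, Nat.card_eq_fintype_card, Fintype.card_coe,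
        Nat.card_eq_fintype_card, Fintype.card_units, hF]
    rw [← h1]
    have hmem : ∀ (m : ℕ), m ∈ A → ∀ v : Fˣ, (γ ^ m * algebraMap F K (v : F)) ≠ 0 ∧
        ∀ j < b, φ (x * (γ ^ m * algebraMap F K (v : F)) * γ ^ j) = 0 := by
      intro m hmA v
      constructor
      · exact mul_ne_zero (pow_ne_zero _ hγ0)
          (fun h => v.ne_zero ((algebraMap F K).injective (h.trans (map_zero _).symm)))
      · intro j hj
        rw [hA, Finset.mem_filter] at hmA
        have h0 := hmA.2 j hj
        have h2 : x * (γ ^ m * algebraMap F K (v : F)) * γ ^ j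
            = (v : F) • (x * γ ^ (m + j)) := by
          rw [Algebra.smul_def, pow_add]; ring
        rw [h2, map_smul, smul_eq_mul, h0, mul_zero]
    apply Nat.card_eq_of_bijective
      (fun p : ↥A × Fˣ =>
        (⟨γ ^ (p.1 : ℕ) * algebraMap F K ((p.2 : F)),
          (hmem _ p.1.2 p.2).1, (hmem _ p.1.2 p.2).2⟩ :
          {y : K | y ≠ 0 ∧ ∀ j < b, φ (x * y * γ ^ j) = 0}))
    constructor
    · rintro ⟨⟨m, hmA⟩, v⟩ ⟨⟨m', hmA'⟩, v'⟩ hpq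
      have heq : γ ^ m * algebraMap F K (v : F) = γ ^ m' * algebraMap F K (v' : F) :=
        congrArg Subtype.val hpq
      have hmr : m < N := Finset.mem_range.mp (Finset.mem_filter.mp (by rwa [hA] at hmA)).1
      have hmr' : m' < N := Finset.mem_range.mp (Finset.mem_filter.mp (by rwa [hA] at hmA')).1
      obtain ⟨hmeq, hveq⟩ := hinj m m' hmr hmr' (v : F) (v' : F) v.ne_zero v'.ne_zero heq
      ext
      · exact hmeq
      · exact hveq
    · rintro ⟨y, hy0, hyT⟩
      obtain ⟨m, hmN, u, hu0, hyeq⟩ := hlog y hy0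
      have hmA : m ∈ A := by
        rw [hA, Finset.mem_filter, Finset.mem_range]
        refine ⟨hmN, fun j hj => ?_⟩
        have h0 := hyT j hj
        rw [hyeq] at h0
        have h2 : x * (γ ^ m * algebraMap F K u) * γ ^ j = u • (x * γ ^ (m + j)) := by
          rw [Algebra.smul_def, pow_add]; ring
        rw [h2, map_smul, smul_eq_mul, mul_eq_zero] at h0
        exact h0.resolve_left hu0
      exact ⟨⟨⟨m, hmA⟩, Units.mk0 u hu0⟩, Subtype.ext hyeq.symm⟩
  -- the code
  set ψ : K →ₗ[F] (ZMod (s * N) → F) :=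
    LinearMap.pi (fun i : ZMod (s * N) => B.flip (γ ^ (ZMod.val i % N))) with hψdef
  have hψ : ∀ (x : K) (i : ZMod (s * N)), ψ x i = φ (x * γ ^ (ZMod.val i % N)) :=
    fun x i => rfl
  have hψinj : Function.Injective ψ := by
    rw [← LinearMap.ker_eq_bot, eq_bot_iff]
    intro x hx
    simp only [LinearMap.mem_ker] at hx
    rw [Submodule.mem_bot]
    by_contra hx0
    have hzero : ∀ m, m < N → φ (x * γ ^ m) = 0 := by
      intro m hm
      have hval : (ZMod.val ((m : ℕ) : ZMod (s * N))) % N = m := by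
        rw [ZMod.val_cast_of_lt (lt_of_lt_of_le hm (Nat.le_mul_of_pos_left N hs))]
        exact Nat.mod_eq_of_lt hm
      have h := congrFun hx ((m : ℕ) : ZMod (s * N))
      rw [hψ, hval] at h
      simpa using h
    have hall : B x = 0 := by
      apply LinearMap.ext
      intro y
      by_cases hy : y = 0
      · simp [hy, hB]
      · obtain ⟨m, hmN, u, hu0, rfl⟩ := hlog y hy
        have h2 : x * (γ ^ m * algebraMap F K u) = u • (x * γ ^ m) := by
          rw [Algebra.smul_def]; ring
        show φ (x * (γ ^ m * algebraMap F K u)) = 0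
        rw [h2, map_smul, smul_eq_mul, hzero m hmN, mul_zero]
    exact hx0 (hBinj (by rw [hall, map_zero]))
  -- the weight of a nonzero codeword
  have hwt : ∀ x : K, x ≠ 0 → bWt b (ψ x) = s * ((q ^ k - q ^ (k - b)) / D) := by
    intro x hx
    set Q : ℕ → Prop := fun m => ∃ j < b, φ (x * γ ^ (m + j)) ≠ 0 with hQ
    have hkey : ∀ a a' : ℕ, a % N = a' % N →
        (φ (x * γ ^ a) ≠ 0 ↔ φ (x * γ ^ a') ≠ 0) := by
      intro a a' h
      rw [not_iff_not, hsc x a, hsc x a', h]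
    have hcond : ∀ (i : ZMod (s * N)) (j : ℕ), j < b →
        ((ψ x) (i + (j : ZMod (s * N))) ≠ 0 ↔ φ (x * γ ^ (ZMod.val i + j)) ≠ 0) := by
      intro i j hj
      have hval : ZMod.val (i + (j : ZMod (s * N))) % N = (ZMod.val i + j) % N := by
        rw [ZMod.val_add, ZMod.val_natCast, Nat.mod_mod_of_dvd _ ⟨s, mul_comm s N⟩]
        exact Nat.ModEq.add_left _ ((Nat.mod_modEq j (s * N)).of_dvd ⟨s, mul_comm s N⟩)
      rw [hψ, hval]
      exact hkey _ _ (Nat.mod_mod_of_dvd _ dvd_rfl)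
    have hset : {i : ZMod (s * N) | ∃ j < b, (ψ x) (i + (j : ZMod (s * N))) ≠ 0}
        = {i : ZMod (s * N) | Q (ZMod.val i)} := by
      ext i
      simp only [Set.mem_setOf_eq, hQ]
      constructor
      · rintro ⟨j, hj, hne⟩; exact ⟨j, hj, (hcond i j hj).mp hne⟩
      · rintro ⟨j, hj, hne⟩; exact ⟨j, hj, (hcond i j hj).mpr hne⟩
    have hQmod : ∀ t, Q t ↔ Q (t % N) := by
      intro t
      simp only [hQ]
      constructor
      · rintro ⟨j, hj, hne⟩
        exact ⟨j, hj, (hkey _ _ (Nat.ModEq.add_right j (Nat.mod_modEq t N))).mpr hne⟩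
      · rintro ⟨j, hj, hne⟩
        exact ⟨j, hj, (hkey _ _ (Nat.ModEq.add_right j (Nat.mod_modEq t N))).mp hne⟩
    have hbij : Nat.card {i : ZMod (s * N) | Q (ZMod.val i)}
        = ((Finset.range (s * N)).filter Q).card := by
      rw [← Fintype.card_coe, ← Nat.card_eq_fintype_card]
      apply Nat.card_eq_of_bijective
        (fun i => (⟨ZMod.val i.1, Finset.mem_filter.mpr
          ⟨Finset.mem_range.mpr (ZMod.val_lt i.1), i.2⟩⟩ : ↥((Finset.range (s * N)).filter Q)))
      constructor
      · rintro ⟨i, hi⟩ ⟨i', hi'⟩ h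
        have hval : ZMod.val i = ZMod.val i' := congrArg Subtype.val h
        exact Subtype.ext (ZMod.val_injective _ hval)
      · rintro ⟨m, hm⟩
        rw [Finset.mem_filter, Finset.mem_range] at hm
        refine ⟨⟨(m : ZMod (s * N)), ?_⟩, ?_⟩
        · show Q (ZMod.val ((m : ℕ) : ZMod (s * N)))
          rw [ZMod.val_cast_of_lt hm.1]
          exact hm.2
        · exact Subtype.ext (ZMod.val_cast_of_lt hm.1)
    have hcardwt : bWt b (ψ x) = ((Finset.range (s * N)).filter Q).card := by
      unfold bWt
      rw [hset, hbij]
    rw [hcardwt, filter_card_range_mul N s Q hQmod]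
    set M := ((Finset.range N).filter (fun m => ∀ j < b, φ (x * γ ^ (m + j)) = 0)).card
      with hMdef
    have hnotQ : (Finset.range N).filter (fun m => ¬ Q m)
        = (Finset.range N).filter (fun m => ∀ j < b, φ (x * γ ^ (m + j)) = 0) := by
      apply Finset.filter_congr
      intro m _
      simp only [hQ]
      constructor
      · intro h j hj
        by_contra hne
        exact h ⟨j, hj, hne⟩
      · rintro h ⟨j, hj, hne⟩
        exact hne (h j hj)
    have hsplit := Finset.card_filter_add_card_filter_not
      (s := Finset.range N) Q
    rw [hnotQ, ← hMdef, Finset.card_range] at hsplit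
    have hcQ : ((Finset.range N).filter Q).card = N - M := by omega
    rw [hcQ]
    congr 1
    have hMD : M * D = q ^ (k - b) - 1 := hMcount x hx
    have hMN : M ≤ N := by
      have := hMdef
      calc M ≤ (Finset.range N).card := by
            rw [hMdef]; exact Finset.card_filter_le _ _
      _ = N := Finset.card_range N
    have h1 : q ^ k - q ^ (k - b) = (N - M) * D := by
      rw [tsub_mul]
      have h2 : N * D = q ^ k - 1 := by rw [mul_comm]; exact hDN
      omega
    rw [h1, Nat.mul_div_cancel _ hD0]
  -- assemble
  refine ⟨LinearMap.range ψ, ?_, ?_, ?_⟩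
  · rw [LinearMap.finrank_range_of_inj hψinj, hrank]
  · intro c hc hc0
    rw [LinearMap.mem_range] at hc
    obtain ⟨x, rfl⟩ := hc
    have hx : x ≠ 0 := by
      rintro rfl
      exact hc0 (map_zero ψ)
    exact hwt x hx
  · constructor
    · exact ⟨ψ γ, LinearMap.mem_range_self ψ γ,
        fun h => hγ0 (hψinj (by rw [h, map_zero])), hwt γ hγ0⟩
    · rintro w ⟨c, hc, hc0, rfl⟩
      rw [LinearMap.mem_range] at hc
      obtain ⟨x, rfl⟩ := hc
      have hx : x ≠ 0 := by
        rintro rfl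
        exact hc0 (map_zero ψ)
      exact (hwt x hx).ge
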